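/- Let A_1, …, A_K be Hermitian n×n complex matrices, set C := Σ_{k=1}^K (A_k ⊗ₖ 1 − 1 ⊗ₖ A_kᵀ)² and T(α,β) := inf { Re trace(Π · C) : Π a coupling of α and β }. If ρ and ω are pure density matrices on ℂ^n (ρ·ρ = ρ and ω·ω = ω), then T(ρ,ω) − ½(T(ρ,ρ) + T(ω,ω)) = Σ_{k=1}^K (Re trace(ρ · A_k) − Re trace(ω · A_k))². (On pure states the squared quadratic Wasserstein divergence is the squared Euclidean distance of the vectors of expectation values.) -/

import Mathlib

open Kronecker Matrix
open scoped ComplexOrder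

/-- `costOp p A` is the cost operator `|A ⊗ₖ 1 - 1 ⊗ₖ Aᵀ|^p`, where `|·|^p` is the
functional calculus applied with `x ↦ |x| ^ p` (real rpow). -/
noncomputable def costOp {n : ℕ} (p : ℝ) (A : Matrix (Fin n) (Fin n) ℂ) :
    Matrix (Fin n × Fin n) (Fin n × Fin n) ℂ :=
  cfc (fun x : ℝ => |x| ^ p)
    (A ⊗ₖ (1 : Matrix (Fin n) (Fin n) ℂ) - (1 : Matrix (Fin n) (Fin n) ℂ) ⊗ₖ Aᵀ)

/-- A density matrix: positive semidefinite with unit trace. -/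
def IsDensity {m : Type*} [Fintype m] (ρ : Matrix m m ℂ) : Prop :=
  ρ.PosSemidef ∧ ρ.trace = 1

/-- `P` is a coupling of the density matrices `ρ` and `ω`. -/
def IsCoupling {n : ℕ} (ρ ω : Matrix (Fin n) (Fin n) ℂ)
    (P : Matrix (Fin n × Fin n) (Fin n × Fin n) ℂ) : Prop :=
  IsDensity P ∧ ∀ B : Matrix (Fin n) (Fin n) ℂ,
    (P * (B ⊗ₖ (1 : Matrix (Fin n) (Fin n) ℂ))).trace = (ω * B).trace ∧
    (P * ((1 : Matrix (Fin n) (Fin n) ℂ) ⊗ₖ Bᵀ)).trace = (ρ * B).trace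

/-- The optimal transport cost between `α` and `β` for the cost operator `C`. -/
noncomputable def wcost {n : ℕ} (C : Matrix (Fin n × Fin n) (Fin n × Fin n) ℂ)
    (α β : Matrix (Fin n) (Fin n) ℂ) : ℝ :=
  sInf {x : ℝ | ∃ P, IsCoupling α β P ∧ x = (P * C).trace.re}


lemma kron_conjT {m p : Type*} [Fintype m] [Fintype p] (A : Matrix m m ℂ) (B : Matrix p p ℂ) :
    (A ⊗ₖ B)ᴴ = Aᴴ ⊗ₖ Bᴴ := by
  ext ⟨i, j⟩ ⟨k, l⟩
  simp [conjTranspose_apply, kroneckerMap_apply, mul_comm]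

lemma sub_kron {m p : Type*} (A B : Matrix m m ℂ) (C : Matrix p p ℂ) :
    (A - B) ⊗ₖ C = A ⊗ₖ C - B ⊗ₖ C := by
  ext ⟨i, j⟩ ⟨k, l⟩
  simp [kroneckerMap_apply, sub_mul]

lemma kron_sub {m p : Type*} (A : Matrix m m ℂ) (B C : Matrix p p ℂ) :
    A ⊗ₖ (B - C) = A ⊗ₖ B - A ⊗ₖ C := by
  ext ⟨i, j⟩ ⟨k, l⟩
  simp [kroneckerMap_apply, mul_sub]

open scoped MatrixOrder Matrix.Norms.L2Operator in
lemma posSemidef_iff_eq_transpose_mul_self {m : Type*} [Fintype m] {A : Matrix m m ℂ} :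
    A.PosSemidef ↔ ∃ B : Matrix m m ℂ, A = Bᴴ * B := by
  classical
  refine ⟨fun hA => ?_, fun ⟨B, hB⟩ => hB ▸ posSemidef_conjTranspose_mul_self B⟩
  obtain ⟨B, hB⟩ := CStarAlgebra.nonneg_iff_eq_star_mul_self.mp hA.nonneg
  exact ⟨B, hB⟩

lemma psd_trace_zero {m : Type*} [Fintype m] {M : Matrix m m ℂ}
    (hM : M.PosSemidef) (h : M.trace = 0) : M = 0 := by
  obtain ⟨B, rfl⟩ := posSemidef_iff_eq_transpose_mul_self.mp hM
  rw [show (Bᴴ * B).trace = ∑ j, dotProduct (star fun i => B i j) (fun i => B i j) from by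
    simp [Matrix.trace, Matrix.diag, Matrix.mul_apply, dotProduct]] at h
  have hz : ∀ j, dotProduct (star fun i => B i j) (fun i => B i j) = 0 := fun j =>
    congrFun ((Fintype.sum_eq_zero_iff_of_nonneg
      fun j => dotProduct_star_self_nonneg fun i => B i j).mp h) j
  have : B = 0 := by
    ext i j
    have := dotProduct_star_self_eq_zero.mp (hz j)
    exact congrFun this i
  simp [this]

lemma psd_proj_zero {m : Type*} [Fintype m] {P Q : Matrix m m ℂ}
    (hP : P.PosSemidef) (hQh : Q.IsHermitian) (hQ : Q * Q = Q)
    (htr : (P * Q).trace = 0) : P * Q = 0 ∧ Q * P = 0 := by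
  have hQPQ : (Q * P * Q).PosSemidef := by
    simpa [hQh.eq] using hP.conjTranspose_mul_mul_same Q
  have htr2 : (Q * P * Q).trace = 0 := by
    rw [trace_mul_cycle, hQ, trace_mul_comm, htr]
  have h0 : Q * P * Q = 0 := psd_trace_zero hQPQ htr2
  obtain ⟨B, hB⟩ := posSemidef_iff_eq_transpose_mul_self.mp hP
  have hBQ : B * Q = 0 := by
    have : (B * Q)ᴴ * (B * Q) = 0 := by
      calc (B * Q)ᴴ * (B * Q) = Q * (Bᴴ * B) * Q := by
            rw [conjTranspose_mul, hQh.eq]; noncomm_ring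
        _ = 0 := by rw [← hB, h0]
    exact conjTranspose_mul_self_eq_zero.mp this
  have hPQ : P * Q = 0 := by rw [hB, mul_assoc, hBQ, mul_zero]
  refine ⟨hPQ, ?_⟩
  have := congrArg conjTranspose hPQ
  rwa [conjTranspose_mul, hQh.eq, hP.1.eq, conjTranspose_zero] at this

lemma pure_vec {n : ℕ} {ω : Matrix (Fin n) (Fin n) ℂ}
    (hω : ω.PosSemidef) (htr : ω.trace = 1) (hpure : ω * ω = ω) :
    ∃ v : Fin n → ℂ, ω = vecMulVec v (star v) := by
  have hH := hω.1
  set U : Matrix (Fin n) (Fin n) ℂ := (hH.eigenvectorUnitary : Matrix (Fin n) (Fin n) ℂ) with hUdef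
  have hUsU : star U * U = 1 := mem_unitaryGroup_iff'.mp hH.eigenvectorUnitary.2
  have hUUs : U * star U = 1 := mem_unitaryGroup_iff.mp hH.eigenvectorUnitary.2
  set d : Fin n → ℂ := RCLike.ofReal ∘ hH.eigenvalues with hd
  have hdiag : star U * ω * U = diagonal d := by
    have := hH.conjStarAlgAut_star_eigenvectorUnitary
    rwa [Unitary.conjStarAlgAut_star_apply] at this
  have hDD : diagonal d * diagonal d = diagonal d := by
    rw [← hdiag]
    calc star U * ω * U * (star U * ω * U) = star U * (ω * (U * star U) * ω) * U := by
          noncomm_ring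
      _ = star U * ω * U := by rw [hUUs, mul_one, hpure]
  have hval : ∀ i, hH.eigenvalues i = 0 ∨ hH.eigenvalues i = 1 := by
    intro i
    have h1 := congrFun (congrFun hDD i) i
    simp only [diagonal_mul_diagonal, diagonal_apply_eq, hd, Function.comp_apply] at h1
    have h2 : hH.eigenvalues i * hH.eigenvalues i = hH.eigenvalues i := by
      exact_mod_cast h1
    have h3 : hH.eigenvalues i * (hH.eigenvalues i - 1) = 0 := by ring_nf; linarith [h2]
    rcases mul_eq_zero.mp h3 with h | h
    · exact Or.inl h
    · exact Or.inr (by linarith)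
  have htrd : ∑ i, hH.eigenvalues i = 1 := by
    have h1 : ω.trace = (diagonal d).trace := by
      nth_rewrite 1 [hH.spectral_theorem]
      rw [Unitary.conjStarAlgAut_apply, ← hUdef, ← hd, trace_mul_cycle, hUsU, one_mul]
    rw [htr, trace_diagonal] at h1
    have h2 : (1 : ℂ) = ((∑ i, hH.eigenvalues i : ℝ) : ℂ) := by
      rw [h1, hd]; push_cast; simp [Function.comp]
    exact_mod_cast h2.symm
  set s : Finset (Fin n) := Finset.univ.filter (fun i => hH.eigenvalues i = 1) with hs
  have hcard : s.card = 1 := by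
    have h1 : ∑ i, hH.eigenvalues i = (s.card : ℝ) := by
      rw [hs, ← Finset.sum_boole]
      exact Finset.sum_congr rfl fun i _ => by rcases hval i with h | h <;> simp [h]
    rw [htrd] at h1
    exact_mod_cast h1.symm
  obtain ⟨j, hj⟩ := Finset.card_eq_one.mp hcard
  have hevj : hH.eigenvalues j = 1 := by
    have : j ∈ s := hj ▸ Finset.mem_singleton_self j
    exact (Finset.mem_filter.mp this).2
  have hev : ∀ i, d i = if i = j then 1 else 0 := by
    intro i
    by_cases hij : i = j
    · subst hij; simp [hd, hevj]
    · rcases hval i with h | h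
      · simp [hd, h, hij]
      · exfalso
        have : i ∈ s := Finset.mem_filter.mpr ⟨Finset.mem_univ i, h⟩
        rw [hj, Finset.mem_singleton] at this
        exact hij this
  refine ⟨fun i => U i j, ?_⟩
  ext i k
  nth_rewrite 1 [hH.spectral_theorem]
  rw [Unitary.conjStarAlgAut_apply, ← hUdef, ← hd]
  rw [show (U * diagonal d * star U) i k = ∑ b, U i b * d b * (star U) b k from by
    simp [mul_apply, diagonal_apply, ite_mul, mul_ite, Finset.sum_ite_eq', Finset.sum_ite_eq, Finset.sum_mul]]
  have hite : ∀ b, U i b * d b * (star U) b k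
      = if b = j then U i b * (star U) b k else 0 := by
    intro b; rw [hev b]; by_cases h : b = j <;> simp [h]
  rw [Finset.sum_congr rfl fun b _ => hite b, Finset.sum_ite_eq' Finset.univ j _]
  simp [vecMulVec_apply, star_apply]

lemma pure_sandwich {n : ℕ} {ω : Matrix (Fin n) (Fin n) ℂ}
    (hω : ω.PosSemidef) (htr : ω.trace = 1) (hpure : ω * ω = ω)
    (B : Matrix (Fin n) (Fin n) ℂ) :
    ω * B * ω = (ω * B).trace • ω := by
  obtain ⟨v, rfl⟩ := pure_vec hω htr hpure
  ext i k
  simp only [mul_apply, vecMulVec_apply, Matrix.trace, Matrix.diag, Matrix.smul_apply, smul_eq_mul,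
    Pi.star_apply, Finset.sum_mul, Finset.mul_sum]
  exact Finset.sum_congr rfl fun b _ => Finset.sum_congr rfl fun a _ => by ring

lemma herm_trace_real {m : Type*} [Fintype m] {σ A : Matrix m m ℂ}
    (hσ : σ.IsHermitian) (hA : A.IsHermitian) : ((σ * A).trace).im = 0 := by
  have h : star ((σ * A).trace) = (σ * A).trace := by
    rw [← Matrix.trace_conjTranspose, conjTranspose_mul, hσ.eq, hA.eq, trace_mul_comm]
  exact Complex.conj_eq_iff_im.mp h

lemma kron_posSemidef {n : ℕ} {X Y : Matrix (Fin n) (Fin n) ℂ}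
    (hX : X.PosSemidef) (hY : Y.PosSemidef) : (X ⊗ₖ Y).PosSemidef := by
  obtain ⟨B, rfl⟩ := posSemidef_iff_eq_transpose_mul_self.mp hX
  obtain ⟨C, rfl⟩ := posSemidef_iff_eq_transpose_mul_self.mp hY
  rw [Matrix.mul_kronecker_mul, ← kron_conjT]
  exact posSemidef_conjTranspose_mul_self _

lemma prod_coupling {n : ℕ} {ρ ω : Matrix (Fin n) (Fin n) ℂ}
    (hρ : IsDensity ρ) (hω : IsDensity ω) : IsCoupling ρ ω (ω ⊗ₖ ρᵀ) := by
  refine ⟨⟨kron_posSemidef hω.1 hρ.1.transpose,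
    by rw [trace_kronecker, trace_transpose, hρ.2, hω.2, mul_one]⟩, fun B => ⟨?_, ?_⟩⟩
  · rw [← Matrix.mul_kronecker_mul, trace_kronecker, mul_one, trace_transpose, hρ.2, mul_one,
      trace_mul_comm]
  · rw [← Matrix.mul_kronecker_mul, mul_one, trace_kronecker, hω.2, one_mul,
      ← transpose_mul, trace_transpose, trace_mul_comm]

lemma coupling_absorb {n : ℕ} {ρ ω : Matrix (Fin n) (Fin n) ℂ}
    (hρ : IsDensity ρ) (hω : IsDensity ω) (hρpure : ρ * ρ = ρ) (hωpure : ω * ω = ω)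
    {P : Matrix (Fin n × Fin n) (Fin n × Fin n) ℂ} (hP : IsCoupling ρ ω P) :
    P * (ω ⊗ₖ ρᵀ) = P ∧ (ω ⊗ₖ ρᵀ) * P = P := by
  have hω1 : P * ((1 - ω) ⊗ₖ (1 : Matrix (Fin n) (Fin n) ℂ)) = 0 ∧
      ((1 - ω) ⊗ₖ (1 : Matrix (Fin n) (Fin n) ℂ)) * P = 0 := by
    have hherm : ((1 - ω) ⊗ₖ (1 : Matrix (Fin n) (Fin n) ℂ)).IsHermitian := by
      rw [Matrix.IsHermitian, kron_conjT, conjTranspose_sub, conjTranspose_one, hω.1.1.eq]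
    have hidem : ((1 - ω) ⊗ₖ (1 : Matrix (Fin n) (Fin n) ℂ)) *
        ((1 - ω) ⊗ₖ (1 : Matrix (Fin n) (Fin n) ℂ)) = (1 - ω) ⊗ₖ 1 := by
      rw [← Matrix.mul_kronecker_mul, mul_one]
      congr 1
      rw [sub_mul, one_mul, mul_sub, mul_one, hωpure]
      abel
    have htr0 : (P * ((1 - ω) ⊗ₖ (1 : Matrix (Fin n) (Fin n) ℂ))).trace = 0 := by
      rw [(hP.2 (1 - ω)).1, mul_sub, mul_one, hωpure, sub_self, trace_zero]
    exact psd_proj_zero hP.1.1 hherm hidem htr0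
  have hρ1 : P * ((1 : Matrix (Fin n) (Fin n) ℂ) ⊗ₖ (1 - ρᵀ)) = 0 ∧
      ((1 : Matrix (Fin n) (Fin n) ℂ) ⊗ₖ (1 - ρᵀ)) * P = 0 := by
    have hherm : ((1 : Matrix (Fin n) (Fin n) ℂ) ⊗ₖ (1 - ρᵀ)).IsHermitian := by
      rw [Matrix.IsHermitian, kron_conjT, conjTranspose_one, conjTranspose_sub,
        conjTranspose_one, hρ.1.1.transpose.eq]
    have hidem : ((1 : Matrix (Fin n) (Fin n) ℂ) ⊗ₖ (1 - ρᵀ)) *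
        ((1 : Matrix (Fin n) (Fin n) ℂ) ⊗ₖ (1 - ρᵀ)) = (1 : Matrix (Fin n) (Fin n) ℂ) ⊗ₖ (1 - ρᵀ) := by
      rw [← Matrix.mul_kronecker_mul, mul_one]
      congr 1
      have htt : ρᵀ * ρᵀ = ρᵀ := by rw [← transpose_mul, hρpure]
      rw [sub_mul, one_mul, mul_sub, mul_one, htt]
      abel
    have htr0 : (P * ((1 : Matrix (Fin n) (Fin n) ℂ) ⊗ₖ (1 - ρᵀ))).trace = 0 := by
      have h1 : (1 - ρ)ᵀ = 1 - ρᵀ := by rw [transpose_sub, transpose_one]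
      rw [← h1, (hP.2 (1 - ρ)).2, mul_sub, mul_one, hρpure, sub_self, trace_zero]
    exact psd_proj_zero hP.1.1 hherm hidem htr0
  have habs1 : P * (ω ⊗ₖ (1 : Matrix (Fin n) (Fin n) ℂ)) = P := by
    have h1 : (ω ⊗ₖ (1 : Matrix (Fin n) (Fin n) ℂ)) = 1 - (1 - ω) ⊗ₖ 1 := by
      rw [sub_kron, ← one_kronecker_one (α := ℂ) (m := Fin n) (n := Fin n)]
      abel
    rw [h1, mul_sub, mul_one, hω1.1, sub_zero]
  have habs1' : (ω ⊗ₖ (1 : Matrix (Fin n) (Fin n) ℂ)) * P = P := by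
    have h1 : (ω ⊗ₖ (1 : Matrix (Fin n) (Fin n) ℂ)) = 1 - (1 - ω) ⊗ₖ 1 := by
      rw [sub_kron, ← one_kronecker_one (α := ℂ) (m := Fin n) (n := Fin n)]
      abel
    rw [h1, sub_mul, one_mul, hω1.2, sub_zero]
  have habs2 : P * ((1 : Matrix (Fin n) (Fin n) ℂ) ⊗ₖ ρᵀ) = P := by
    have h1 : ((1 : Matrix (Fin n) (Fin n) ℂ) ⊗ₖ ρᵀ) = 1 - 1 ⊗ₖ (1 - ρᵀ) := by
      rw [kron_sub, ← one_kronecker_one (α := ℂ) (m := Fin n) (n := Fin n)]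
      abel
    rw [h1, mul_sub, mul_one, hρ1.1, sub_zero]
  have habs2' : ((1 : Matrix (Fin n) (Fin n) ℂ) ⊗ₖ ρᵀ) * P = P := by
    have h1 : ((1 : Matrix (Fin n) (Fin n) ℂ) ⊗ₖ ρᵀ) = 1 - 1 ⊗ₖ (1 - ρᵀ) := by
      rw [kron_sub, ← one_kronecker_one (α := ℂ) (m := Fin n) (n := Fin n)]
      abel
    rw [h1, sub_mul, one_mul, hρ1.2, sub_zero]
  have hsplit : ω ⊗ₖ ρᵀ = (ω ⊗ₖ (1 : Matrix (Fin n) (Fin n) ℂ)) *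
      ((1 : Matrix (Fin n) (Fin n) ℂ) ⊗ₖ ρᵀ) := by
    rw [← Matrix.mul_kronecker_mul, mul_one, one_mul]
  constructor
  · rw [hsplit, ← mul_assoc, habs1, habs2]
  · rw [hsplit, mul_assoc, habs2', habs1']

lemma coupling_cross {n : ℕ} {ρ ω : Matrix (Fin n) (Fin n) ℂ}
    (hρ : IsDensity ρ) (hω : IsDensity ω) (hρpure : ρ * ρ = ρ) (hωpure : ω * ω = ω)
    {P : Matrix (Fin n × Fin n) (Fin n × Fin n) ℂ} (hP : IsCoupling ρ ω P)
    (A : Matrix (Fin n) (Fin n) ℂ) :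
    (P * (A ⊗ₖ Aᵀ)).trace = (ω * A).trace * (ρ * A).trace := by
  obtain ⟨habsR, habsL⟩ := coupling_absorb hρ hω hρpure hωpure hP
  set M : Matrix (Fin n × Fin n) (Fin n × Fin n) ℂ := ω ⊗ₖ ρᵀ with hM
  have hsand : M * (A ⊗ₖ Aᵀ) * M = ((ω * A).trace * (ρ * A).trace) • M := by
    rw [hM, ← Matrix.mul_kronecker_mul, ← Matrix.mul_kronecker_mul]
    have h1 : ω * A * ω = (ω * A).trace • ω := pure_sandwich hω.1 hω.2 hωpure A
    have h2 : ρᵀ * Aᵀ * ρᵀ = (ρ * A).trace • ρᵀ := by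
      rw [← transpose_mul, ← transpose_mul, ← mul_assoc, pure_sandwich hρ.1 hρ.2 hρpure A,
        transpose_smul]
    rw [h1, h2, smul_kronecker, kronecker_smul, smul_smul]
  calc (P * (A ⊗ₖ Aᵀ)).trace = (M * (P * M) * (A ⊗ₖ Aᵀ)).trace := by rw [habsR, habsL]
    _ = (P * (M * (A ⊗ₖ Aᵀ) * M)).trace := by
        rw [mul_assoc, trace_mul_comm]; simp only [mul_assoc]
    _ = ((ω * A).trace * (ρ * A).trace) * P.trace := by
        rw [hsand, Matrix.mul_smul, trace_smul, smul_eq_mul, habsR]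
    _ = (ω * A).trace * (ρ * A).trace := by rw [hP.1.2, mul_one]


lemma coupling_cost {n : ℕ} {ρ ω : Matrix (Fin n) (Fin n) ℂ}
    (hρ : IsDensity ρ) (hω : IsDensity ω) (hρpure : ρ * ρ = ρ) (hωpure : ω * ω = ω)
    {P : Matrix (Fin n × Fin n) (Fin n × Fin n) ℂ} (hP : IsCoupling ρ ω P)
    (A : Matrix (Fin n) (Fin n) ℂ) :
    (P * ((A ⊗ₖ (1 : Matrix (Fin n) (Fin n) ℂ) -
        (1 : Matrix (Fin n) (Fin n) ℂ) ⊗ₖ Aᵀ) ^ 2)).trace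
      = (ω * (A * A)).trace + (ρ * (A * A)).trace
        - 2 * ((ω * A).trace * (ρ * A).trace) := by
  have hsq : (A ⊗ₖ (1 : Matrix (Fin n) (Fin n) ℂ) -
      (1 : Matrix (Fin n) (Fin n) ℂ) ⊗ₖ Aᵀ) ^ 2
      = (A * A) ⊗ₖ (1 : Matrix (Fin n) (Fin n) ℂ)
        + (1 : Matrix (Fin n) (Fin n) ℂ) ⊗ₖ (A * A)ᵀ
        - (A ⊗ₖ Aᵀ) - (A ⊗ₖ Aᵀ) := by
    have h1 : (A ⊗ₖ (1 : Matrix (Fin n) (Fin n) ℂ) -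
        (1 : Matrix (Fin n) (Fin n) ℂ) ⊗ₖ Aᵀ) ^ 2
        = (A ⊗ₖ (1 : Matrix (Fin n) (Fin n) ℂ)) * (A ⊗ₖ (1 : Matrix (Fin n) (Fin n) ℂ))
          + ((1 : Matrix (Fin n) (Fin n) ℂ) ⊗ₖ Aᵀ) * ((1 : Matrix (Fin n) (Fin n) ℂ) ⊗ₖ Aᵀ)
          - (A ⊗ₖ (1 : Matrix (Fin n) (Fin n) ℂ)) * ((1 : Matrix (Fin n) (Fin n) ℂ) ⊗ₖ Aᵀ)
          - ((1 : Matrix (Fin n) (Fin n) ℂ) ⊗ₖ Aᵀ) * (A ⊗ₖ (1 : Matrix (Fin n) (Fin n) ℂ)) := by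
      noncomm_ring
    rw [h1, ← Matrix.mul_kronecker_mul, ← Matrix.mul_kronecker_mul,
      ← Matrix.mul_kronecker_mul, ← Matrix.mul_kronecker_mul]
    simp only [mul_one, one_mul, ← transpose_mul]
  rw [hsq, mul_sub, mul_sub, mul_add, trace_sub, trace_sub, trace_add,
    (hP.2 (A * A)).1, (hP.2 (A * A)).2, coupling_cross hρ hω hρpure hωpure hP A]
  ring

lemma wcost_pure {n : ℕ} (K : ℕ)
    (A : Fin K → Matrix (Fin n) (Fin n) ℂ)
    {ρ ω : Matrix (Fin n) (Fin n) ℂ}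
    (hρ : IsDensity ρ) (hω : IsDensity ω) (hρpure : ρ * ρ = ρ) (hωpure : ω * ω = ω) :
    wcost (∑ k, (A k ⊗ₖ (1 : Matrix (Fin n) (Fin n) ℂ) -
        (1 : Matrix (Fin n) (Fin n) ℂ) ⊗ₖ (A k)ᵀ) ^ 2) ρ ω
      = ∑ k, ((ω * (A k * A k)).trace + (ρ * (A k * A k)).trace
        - 2 * ((ω * A k).trace * (ρ * A k).trace)).re := by
  set C := ∑ k, (A k ⊗ₖ (1 : Matrix (Fin n) (Fin n) ℂ) -
      (1 : Matrix (Fin n) (Fin n) ℂ) ⊗ₖ (A k)ᵀ) ^ 2 with hC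
  have hval : ∀ P, IsCoupling ρ ω P → (P * C).trace.re
      = ∑ k, ((ω * (A k * A k)).trace + (ρ * (A k * A k)).trace
        - 2 * ((ω * A k).trace * (ρ * A k).trace)).re := by
    intro P hP
    rw [hC, Finset.mul_sum, trace_sum]
    rw [Complex.re_sum]
    exact Finset.sum_congr rfl fun k _ => by
      rw [coupling_cost hρ hω hρpure hωpure hP (A k)]
  have hset : {x : ℝ | ∃ P, IsCoupling ρ ω P ∧ x = (P * C).trace.re}
      = {∑ k, ((ω * (A k * A k)).trace + (ρ * (A k * A k)).trace
        - 2 * ((ω * A k).trace * (ρ * A k).trace)).re} := by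
    ext x
    simp only [Set.mem_setOf_eq, Set.mem_singleton_iff]
    constructor
    · rintro ⟨P, hP, rfl⟩
      exact hval P hP
    · rintro rfl
      exact ⟨ω ⊗ₖ ρᵀ, prod_coupling hρ hω, (hval _ (prod_coupling hρ hω)).symm⟩
  rw [wcost, hset, csInf_singleton]

/-- On pure states the squared quadratic Wasserstein divergence is the squared Euclidean
distance of the vectors of expectation values. -/
theorem quad_div_on_pure_states {n : ℕ} (K : ℕ)
    (A : Fin K → Matrix (Fin n) (Fin n) ℂ) (hA : ∀ k, (A k).IsHermitian)
    (ρ ω : Matrix (Fin n) (Fin n) ℂ) (hρ : IsDensity ρ) (hω : IsDensity ω)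
    (hρpure : ρ * ρ = ρ) (hωpure : ω * ω = ω) :
    wcost (∑ k, (A k ⊗ₖ (1 : Matrix (Fin n) (Fin n) ℂ) -
        (1 : Matrix (Fin n) (Fin n) ℂ) ⊗ₖ (A k)ᵀ) ^ 2) ρ ω -
      (wcost (∑ k, (A k ⊗ₖ (1 : Matrix (Fin n) (Fin n) ℂ) -
          (1 : Matrix (Fin n) (Fin n) ℂ) ⊗ₖ (A k)ᵀ) ^ 2) ρ ρ +
        wcost (∑ k, (A k ⊗ₖ (1 : Matrix (Fin n) (Fin n) ℂ) -
          (1 : Matrix (Fin n) (Fin n) ℂ) ⊗ₖ (A k)ᵀ) ^ 2) ω ω) / 2 =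
    ∑ k, ((ρ * A k).trace.re - (ω * A k).trace.re) ^ 2 := by
  rw [wcost_pure K A hρ hω hρpure hωpure, wcost_pure K A hρ hρ hρpure hρpure,
    wcost_pure K A hω hω hωpure hωpure]
  have himω : ∀ k, ((ω * A k).trace).im = 0 := fun k => herm_trace_real hω.1.1 (hA k)
  have himρ : ∀ k, ((ρ * A k).trace).im = 0 := fun k => herm_trace_real hρ.1.1 (hA k)
  rw [← Finset.sum_add_distrib, Finset.sum_div, ← Finset.sum_sub_distrib]
  refine Finset.sum_congr rfl fun k _ => ?_
  simp only [Complex.sub_re, Complex.add_re, Complex.mul_re, Complex.re_ofNat,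
    Complex.im_ofNat, himω k, himρ k, mul_zero, zero_mul, sub_zero, zero_sub]
  ring
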